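/- For p ≠ 1/2, the law μ_n^p of the stabilization time on {0,1}^n with i.i.d. Bernoulli(p) bits satisfies μ_n^p = ((p^{n+1} − (1−p)^{n+1})/(2p−1))·δ_0 + Σ_{r=0}^{n−2} (((1−p)p^{n−r} − p(1−p)^{n−r})/(2p−1))·μ̃_{r+2}^p, where μ̃_m^p is the law of the stabilization time on strings starting with 0 and ending with 1 whose middle m−2 bits are i.i.d. Bernoulli(p). -/

import Mathlib

open Finset

/-- The k-th bit of a string of length `n`, padded with `false` out of range. -/
def bit (n : ℕ) (ω : Fin n → Bool) (k : ℕ) : Bool :=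
  if h : k < n then ω ⟨k, h⟩ else false

/-- One step of the evolution: every occurrence of "01" is replaced by "10"
(simultaneously).  `E(ω)_i = 1` iff `(ω_i = 1 ∧ ¬(i ≥ 2 ∧ ω_{i-1} = 0)) ∨
(ω_i = 0 ∧ i < n ∧ ω_{i+1} = 1)` (1-indexed; here 0-indexed). -/
def evolve (n : ℕ) (ω : Fin n → Bool) : Fin n → Bool :=
  fun i =>
    (bit n ω i.val && !(decide (0 < i.val) && !bit n ω (i.val - 1)))
      || (!bit n ω i.val && bit n ω (i.val + 1))

/-- A string is stable iff it contains no occurrence of "01". -/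
def IsStable (n : ℕ) (ω : Fin n → Bool) : Prop :=
  ∀ k : ℕ, ¬(bit n ω k = false ∧ bit n ω (k + 1) = true)

/-- The stabilization time: the least number of applications of `evolve`
after which the string is stable. -/
noncomputable def stabTime (n : ℕ) (ω : Fin n → Bool) : ℕ :=
  sInf {m : ℕ | IsStable n ((evolve n)^[m] ω)}

/-- The Bernoulli(p) weight of a string. -/
def weight (p : ℝ) (n : ℕ) (ω : Fin n → Bool) : ℝ :=
  ∏ i, (if ω i then p else 1 - p)

/-- The string `0 x 1` of length `r + 2` obtained by surrounding `x` with a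
leading 0 and a trailing 1. -/
def special (r : ℕ) (x : Fin r → Bool) : Fin (r + 2) → Bool :=
  fun i =>
    if _h0 : i.val = 0 then false
    else if h : i.val ≤ r then x ⟨i.val - 1, by omega⟩
    else true

-- ### bit-level lemmas

lemma bit_eq (n : ℕ) (ω : Fin n → Bool) (i : Fin n) : bit n ω i.val = ω i := by
  simp [bit, i.isLt]

lemma bit_oob {n : ℕ} (ω : Fin n → Bool) {k : ℕ} (h : n ≤ k) : bit n ω k = false := by
  simp [bit]; omega

lemma ext_bit {n : ℕ} {ω ω' : Fin n → Bool} (h : ∀ k, bit n ω k = bit n ω' k) : ω = ω' := by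
  funext i
  have := h i.val
  rwa [bit_eq, bit_eq] at this

lemma bit_evolve (n : ℕ) (ω : Fin n → Bool) (k : ℕ) :
    bit n (evolve n ω) k =
      ((bit n ω k && !(decide (0 < k) && !bit n ω (k - 1)))
        || (!bit n ω k && bit n ω (k + 1))) := by
  by_cases h : k < n
  · have : bit n (evolve n ω) k = evolve n ω ⟨k, h⟩ := bit_eq n (evolve n ω) ⟨k, h⟩
    rw [this]; rfl
  · rw [bit_oob _ (by omega), bit_oob ω (by omega), bit_oob ω (by omega : n ≤ k + 1)]
    simp

-- ### embedding

def emb (n a m : ℕ) (w : Fin m → Bool) : Fin n → Bool :=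
  fun i => if i.val < a then true else bit m w (i.val - a)

lemma bit_emb {n a m : ℕ} (h : a + m ≤ n) (w : Fin m → Bool) (k : ℕ) :
    bit n (emb n a m w) k = if k < a then true else bit m w (k - a) := by
  by_cases hk : k < n
  · have : bit n (emb n a m w) k = emb n a m w ⟨k, hk⟩ := bit_eq n _ ⟨k, hk⟩
    rw [this]; rfl
  · rw [bit_oob _ (by omega)]
    rw [if_neg (by omega), bit_oob w (by omega)]

lemma evolve_emb {n a m : ℕ} (h : a + m ≤ n) (w : Fin m → Bool) :
    evolve n (emb n a m w) = emb n a m (evolve m w) := by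
  apply ext_bit
  intro k
  simp only [bit_evolve, bit_emb h]
  rcases Nat.lt_or_ge k a with hk | hk
  · have hk1 : k - 1 < a := by omega
    simp [hk, hk1]
  · have hk' : ¬ k < a := by omega
    have hk1 : k + 1 - a = (k - a) + 1 := by omega
    rw [if_neg hk', if_neg (by omega : ¬ k + 1 < a), hk1]
    rcases Nat.eq_or_lt_of_le hk with heq | hlt
    · -- k = a
      rcases Nat.eq_zero_or_pos a with ha | ha
      · subst ha; simp [← heq]
      · have h0k : 0 < k := by omega
        have : k - 1 < a := by omega
        rw [if_pos this, ← heq, Nat.sub_self]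
        cases bit m w 0 <;> simp [ha, h0k]
    · -- a < k
      have h0k : 0 < k := by omega
      have h1 : ¬ k - 1 < a := by omega
      have h2 : k - 1 - a = (k - a) - 1 := by omega
      have h3 : 0 < k - a := by omega
      rw [if_neg h1, h2]
      simp [h0k, h3, hk']

lemma isStable_emb {n a m : ℕ} (h : a + m ≤ n) (w : Fin m → Bool) :
    IsStable n (emb n a m w) ↔ IsStable m w := by
  constructor
  · intro hs k hk
    apply hs (a + k)
    rw [bit_emb h, bit_emb h, if_neg (by omega), if_neg (by omega)]
    rw [show a + k - a = k by omega, show a + k + 1 - a = k + 1 by omega]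
    exact hk
  · intro hs k hk
    rw [bit_emb h, bit_emb h] at hk
    rcases Nat.lt_or_ge k a with hk' | hk'
    · rw [if_pos hk'] at hk; exact absurd hk.1 (by simp)
    · rw [if_neg (by omega), if_neg (by omega),
        show k + 1 - a = (k - a) + 1 by omega] at hk
      exact hs (k - a) hk

lemma iterate_evolve_emb {n a m : ℕ} (h : a + m ≤ n) (w : Fin m → Bool) (s : ℕ) :
    (evolve n)^[s] (emb n a m w) = emb n a m ((evolve m)^[s] w) := by
  induction s generalizing w with
  | zero => rfl
  | succ s ih =>
      rw [Function.iterate_succ_apply, Function.iterate_succ_apply, evolve_emb h, ih]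

lemma stabTime_emb {n a m : ℕ} (h : a + m ≤ n) (w : Fin m → Bool) :
    stabTime n (emb n a m w) = stabTime m w := by
  unfold stabTime
  congr 1
  ext s
  simp only [Set.mem_setOf_eq, iterate_evolve_emb h, isStable_emb h]

-- ### special strings

lemma bit_special (r : ℕ) (x : Fin r → Bool) (k : ℕ) :
    bit (r + 2) (special r x) k =
      if k = 0 then false
      else if k = r + 1 then true
      else bit r x (k - 1) := by
  by_cases hk : k < r + 2
  · rw [show bit (r + 2) (special r x) k = special r x ⟨k, hk⟩ from bit_eq _ _ ⟨k, hk⟩]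
    unfold special
    dsimp only
    by_cases h0 : k = 0
    · rw [dif_pos h0, if_pos h0]
    · rw [dif_neg h0, if_neg h0]
      by_cases h1 : k ≤ r
      · rw [dif_pos h1, if_neg (by omega)]
        unfold bit
        rw [dif_pos (show k - 1 < r by omega)]
      · rw [dif_neg h1, if_pos (by omega)]
  · rw [bit_oob _ (by omega), if_neg (by omega), if_neg (by omega), bit_oob _ (by omega)]

lemma not_isStable_special (r : ℕ) (x : Fin r → Bool) :
    ¬ IsStable (r + 2) (special r x) := by
  intro hs
  have all_false : ∀ k, bit (r + 2) (special r x) k = false := by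
    intro k
    induction k with
    | zero => rw [bit_special]; simp
    | succ k ih =>
        rcases Bool.eq_false_or_eq_true (bit (r + 2) (special r x) (k + 1)) with h | h
        · exfalso; exact hs k ⟨ih, h⟩
        · exact h
  have := all_false (r + 1)
  rw [bit_special] at this
  simp at this

lemma unstable_decomp {n : ℕ} {ω : Fin n → Bool} (h : ¬ IsStable n ω) :
    ∃ (r : ℕ) (a : ℕ) (x : Fin r → Bool), r < n - 1 ∧ a < n - 1 - r ∧
      ω = emb n a (r + 2) (special r x) := by
  classical
  obtain ⟨k₀, hk₀⟩ : ∃ k, bit n ω k = false ∧ bit n ω (k + 1) = true := by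
    by_contra hc; push_neg at hc
    exact h fun k hk => by
      have h2 := hc k hk.1
      rw [hk.2] at h2
      exact h2 rfl
  set ℓ := sInf {k | bit n ω k = false} with hℓdef
  have hne1 : {k | bit n ω k = false}.Nonempty := ⟨n, bit_oob ω le_rfl⟩
  have hℓ : bit n ω ℓ = false := Nat.sInf_mem hne1
  have hlead : ∀ k, k < ℓ → bit n ω k = true := by
    intro k hk
    have := Nat.notMem_of_lt_sInf (hℓdef ▸ hk)
    simpa using this
  set T := sInf {k | ∀ j, k ≤ j → bit n ω j = false} with hTdef
  have hne2 : {k | ∀ j, k ≤ j → bit n ω j = false}.Nonempty :=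
    ⟨n, fun j hj => bit_oob ω hj⟩
  have hT : ∀ j, T ≤ j → bit n ω j = false := Nat.sInf_mem hne2
  have hTpos : 0 < T := by
    rcases Nat.eq_zero_or_pos T with h0 | h0
    · exact absurd (hT (k₀ + 1) (by omega)) (by rw [hk₀.2]; simp)
    · exact h0
  have hlast : bit n ω (T - 1) = true := by
    rcases Bool.eq_false_or_eq_true (bit n ω (T - 1)) with ht | hf
    · exact ht
    · exfalso
      have hmem : (T - 1) ∈ {k | ∀ j, k ≤ j → bit n ω j = false} := by
        intro j hj
        rcases Nat.eq_or_lt_of_le hj with rfl | hlt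
        · exact hf
        · exact hT j (by omega)
      exact Nat.notMem_of_lt_sInf (show T - 1 < T by omega) (hTdef ▸ hmem)
  set L := T - 1 with hLdef
  have hℓleL : ℓ < L := by
    have h1 : ℓ ≤ k₀ := by
      by_contra hc; push_neg at hc
      exact absurd (hlead k₀ hc) (by rw [hk₀.1]; simp)
    have h2 : k₀ + 1 ≤ L := by
      by_contra hc; push_neg at hc
      exact absurd (hT (k₀ + 1) (by omega)) (by rw [hk₀.2]; simp)
    omega
  have hLn : L < n := by
    by_contra hc; push_neg at hc
    exact absurd (bit_oob ω hc) (by rw [hlast]; simp)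
  refine ⟨L - ℓ - 1, ℓ, fun i => bit n ω (ℓ + 1 + i.val), by omega, by omega, ?_⟩
  have hbound : ℓ + (L - ℓ - 1 + 2) ≤ n := by omega
  apply ext_bit
  intro k
  rw [bit_emb hbound, bit_special]
  rcases Nat.lt_or_ge k ℓ with hk | hk
  · rw [if_pos hk]; exact hlead k hk
  rw [if_neg (by omega)]
  rcases Nat.eq_or_lt_of_le hk with rfl | hk2
  · rw [if_pos (by omega)]; exact hℓ
  rw [if_neg (by omega)]
  rcases Nat.lt_or_ge k L with hk3 | hk3
  · rw [if_neg (by omega)]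
    have hin : k - ℓ - 1 < L - ℓ - 1 := by omega
    rw [show bit (L - ℓ - 1) (fun i => bit n ω (ℓ + 1 + i.val)) (k - ℓ - 1)
        = bit n ω (ℓ + 1 + (k - ℓ - 1)) from by simp [bit, hin]]
    congr 1; omega
  rcases Nat.eq_or_lt_of_le hk3 with rfl | hk4
  · rw [if_pos (by omega)]; exact hlast
  · rw [if_neg (by omega),
      bit_oob (fun i => bit n ω (ℓ + 1 + i.val)) (show L - ℓ - 1 ≤ k - ℓ - 1 by omega)]
    exact hT k (by omega)

lemma emb_special_bits {n r a : ℕ} (h : a + r + 2 ≤ n) (x : Fin r → Bool) :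
    (∀ k < a, bit n (emb n a (r + 2) (special r x)) k = true) ∧
    bit n (emb n a (r + 2) (special r x)) a = false ∧
    bit n (emb n a (r + 2) (special r x)) (a + r + 1) = true ∧
    (∀ k, a + r + 2 ≤ k → bit n (emb n a (r + 2) (special r x)) k = false) ∧
    (∀ i : Fin r, bit n (emb n a (r + 2) (special r x)) (a + 1 + i.val) = x i) := by
  have hb : a + (r + 2) ≤ n := by omega
  refine ⟨fun k hk => by rw [bit_emb hb, if_pos hk], ?_, ?_, ?_, ?_⟩
  · rw [bit_emb hb, if_neg (by omega), Nat.sub_self, bit_special]; simp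
  · rw [bit_emb hb, if_neg (by omega), bit_special,
      show a + r + 1 - a = r + 1 by omega]
    simp
  · intro k hk
    rw [bit_emb hb, if_neg (by omega), bit_special,
      if_neg (by omega), if_neg (by omega), bit_oob _ (by omega)]
  · intro i
    rw [bit_emb hb, if_neg (by omega), bit_special,
      if_neg (by omega), if_neg (by omega),
      show a + 1 + i.val - a - 1 = i.val by omega, bit_eq]

lemma emb_special_inj {n : ℕ} {r a : ℕ} {x : Fin r → Bool} {r' a' : ℕ} {x' : Fin r' → Bool}
    (h1 : a + r + 2 ≤ n) (h2 : a' + r' + 2 ≤ n)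
    (heq : emb n a (r + 2) (special r x) = emb n a' (r' + 2) (special r' x')) :
    a = a' ∧ r = r' ∧ HEq x x' := by
  obtain ⟨B1, B2, B3, B4, B5⟩ := emb_special_bits h1 x
  obtain ⟨C1, C2, C3, C4, C5⟩ := emb_special_bits h2 x'
  rw [← heq] at C1 C2 C3 C4 C5
  have ha : a = a' := by
    by_contra hc
    rcases Nat.lt_or_ge a a' with hlt | hge
    · exact absurd (C1 a hlt) (by rw [B2]; simp)
    · exact absurd (B1 a' (by omega)) (by rw [C2]; simp)
  subst ha
  have hr : r = r' := by
    by_contra hc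
    rcases Nat.lt_or_ge r r' with hlt | hge
    · exact absurd C3 (by rw [B4 (a + r' + 1) (by omega)]; simp)
    · exact absurd B3 (by rw [C4 (a + r + 1) (by omega)]; simp)
  subst hr
  refine ⟨rfl, rfl, heq_of_eq ?_⟩
  funext i
  rw [← B5 i, ← C5 i]

-- ### weights

lemma weight_eq_prod_range (p : ℝ) (n : ℕ) (ω : Fin n → Bool) :
    weight p n ω = ∏ i ∈ range n, (if bit n ω i then p else 1 - p) := by
  unfold weight
  rw [← Fin.prod_univ_eq_prod_range (fun k => if bit n ω k then p else 1 - p) n]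
  exact Finset.prod_congr rfl fun i _ => by rw [bit_eq]

lemma weight_emb {n a m : ℕ} (h : a + m ≤ n) (w : Fin m → Bool) (p : ℝ) :
    weight p n (emb n a m w) = p ^ a * weight p m w * (1 - p) ^ (n - a - m) := by
  rw [weight_eq_prod_range, weight_eq_prod_range]
  rw [show range n = range (a + (m + (n - a - m))) from by congr 1; omega]
  rw [prod_range_add, prod_range_add]
  have e1 : ∀ i ∈ range a, (if bit n (emb n a m w) i then p else 1 - p) = p := by
    intro i hi
    rw [bit_emb h, if_pos (mem_range.1 hi)]
    simp
  have e2 : ∀ i ∈ range m,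
      (if bit n (emb n a m w) (a + i) then p else 1 - p)
        = (if bit m w i then p else 1 - p) := by
    intro i hi
    have hb : bit n (emb n a m w) (a + i) = bit m w i := by
      rw [bit_emb h, if_neg (show ¬ a + i < a by omega), show a + i - a = i by omega]
    rw [hb]
  have e3 : ∀ i ∈ range (n - a - m),
      (if bit n (emb n a m w) (a + (m + i)) then p else 1 - p) = 1 - p := by
    intro i hi
    have hb : bit n (emb n a m w) (a + (m + i)) = false := by
      rw [bit_emb h, if_neg (show ¬ a + (m + i) < a by omega),
        show a + (m + i) - a = m + i by omega, bit_oob w (by omega)]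
    rw [hb]
    simp
  rw [Finset.prod_congr rfl e1, Finset.prod_congr rfl e2, Finset.prod_congr rfl e3,
    Finset.prod_const, Finset.prod_const, card_range, card_range]
  ring

lemma weight_nil (p : ℝ) (w : Fin 0 → Bool) : weight p 0 w = 1 := by
  unfold weight; simp

lemma weight_special (p : ℝ) (r : ℕ) (x : Fin r → Bool) :
    weight p (r + 2) (special r x) = (1 - p) * weight p r x * p := by
  rw [weight_eq_prod_range, weight_eq_prod_range]
  rw [show range (r + 2) = range (1 + (r + 1)) from by congr 1; omega]
  rw [prod_range_add, prod_range_one, prod_range_succ]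
  have e0 : (if bit (r + 2) (special r x) 0 then p else 1 - p) = 1 - p := by
    rw [bit_special]; simp
  have e1 : ∀ i ∈ range r,
      (if bit (r + 2) (special r x) (1 + i) then p else 1 - p)
        = (if bit r x i then p else 1 - p) := by
    intro i hi
    have hir := mem_range.1 hi
    have hb : bit (r + 2) (special r x) (1 + i) = bit r x i := by
      rw [bit_special, if_neg (show ¬ 1 + i = 0 by omega),
        if_neg (show ¬ 1 + i = r + 1 by omega), show 1 + i - 1 = i by omega]
    rw [hb]
  have e2 : (if bit (r + 2) (special r x) (1 + r) then p else 1 - p) = p := by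
    have hb : bit (r + 2) (special r x) (1 + r) = true := by
      rw [bit_special, if_neg (show ¬ 1 + r = 0 by omega),
        if_pos (show 1 + r = r + 1 by omega)]
    rw [hb]
    simp
  rw [e0, e2, Finset.prod_congr rfl e1]
  ring

-- ### stable strings

lemma stabTime_of_isStable {n : ℕ} {ω : Fin n → Bool} (h : IsStable n ω) :
    stabTime n ω = 0 := by
  unfold stabTime
  refine Nat.sInf_eq_zero.2 (Or.inl ?_)
  show IsStable n ((evolve n)^[0] ω)
  simpa using h

lemma isStable_nil (w : Fin 0 → Bool) : IsStable 0 w := by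
  intro k hk
  have h2 := hk.2
  rw [bit_oob w (Nat.zero_le _)] at h2
  exact absurd h2 (by simp)

lemma isStable_ones {n a : ℕ} (h : a ≤ n) (w : Fin 0 → Bool) :
    IsStable n (emb n a 0 w) :=
  (isStable_emb (by omega) w).2 (isStable_nil w)

lemma isStable_decomp {n : ℕ} {ω : Fin n → Bool} (h : IsStable n ω) :
    ∃ a, a < n + 1 ∧ ω = emb n a 0 Fin.elim0 := by
  set ℓ := sInf {k | bit n ω k = false} with hℓdef
  have hne1 : {k | bit n ω k = false}.Nonempty := ⟨n, bit_oob ω le_rfl⟩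
  have hℓ : bit n ω ℓ = false := Nat.sInf_mem hne1
  have hlead : ∀ k, k < ℓ → bit n ω k = true := by
    intro k hk
    have := Nat.notMem_of_lt_sInf (hℓdef ▸ hk)
    simpa using this
  have hℓn : ℓ ≤ n := Nat.sInf_le (bit_oob ω le_rfl)
  have hup : ∀ k, ℓ ≤ k → bit n ω k = false := by
    intro k hk
    induction k with
    | zero => rw [show ℓ = 0 by omega] at hℓ; exact hℓ
    | succ k ih =>
        rcases Nat.eq_or_lt_of_le hk with heq | hlt
        · rw [← heq]; exact hℓ
        · have hkf := ih (by omega)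
          rcases Bool.eq_false_or_eq_true (bit n ω (k + 1)) with ht | hf
          · exact absurd ⟨hkf, ht⟩ (h k)
          · exact hf
  refine ⟨ℓ, by omega, ext_bit fun k => ?_⟩
  rw [bit_emb (by omega) Fin.elim0]
  rcases Nat.lt_or_ge k ℓ with hk | hk
  · rw [if_pos hk]; exact hlead k hk
  · rw [if_neg (by omega), bit_oob Fin.elim0 (by omega)]
    exact hup k hk

lemma ones_inj {n a a' : ℕ} (ha : a ≤ n) (ha' : a' ≤ n)
    (h : emb n a 0 (Fin.elim0 : Fin 0 → Bool) = emb n a' 0 Fin.elim0) : a = a' := by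
  by_contra hc
  have hb := fun k => congrArg (fun ω => bit n ω k) h
  rcases Nat.lt_or_ge a a' with hlt | hge
  · have := hb a
    rw [bit_emb (by omega) Fin.elim0, bit_emb (by omega) Fin.elim0,
      if_neg (by omega), if_pos hlt, bit_oob Fin.elim0 (by omega)] at this
    exact absurd this (by simp)
  · have ha'a : a' < a := by omega
    have := hb a'
    rw [bit_emb (by omega) Fin.elim0, bit_emb (by omega) Fin.elim0,
      if_pos ha'a, if_neg (by omega), bit_oob Fin.elim0 (by omega)] at this
    exact absurd this (by simp)

-- ### geometric sums

lemma geom_aux {p : ℝ} (hne : p ≠ 1 / 2) (N : ℕ) :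
    ∑ a ∈ range N, p ^ a * (1 - p) ^ (N - 1 - a)
      = (p ^ N - (1 - p) ^ N) / (2 * p - 1) := by
  have h2p : (2 * p - 1 : ℝ) ≠ 0 := fun hc => hne (by linarith)
  rw [eq_div_iff h2p]
  have hgeom := geom_sum₂_mul p (1 - p) N
  rw [show (2 * p - 1 : ℝ) = p - (1 - p) by ring]
  exact hgeom

/-- For `p ≠ 1/2` the law `μ_n^p` of the stabilization time decomposes as
`μ_n^p = ((p^{n+1} - (1-p)^{n+1})/(2p-1)) δ_0
  + Σ_{r=0}^{n-2} (((1-p)p^{n-r} - p(1-p)^{n-r})/(2p-1)) μ̃_{r+2}^p`. -/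
theorem stmt12 (n : ℕ) (t : ℕ) (p : ℝ) (hp : p ∈ Set.Ioo (0 : ℝ) 1)
    (hne : p ≠ 1 / 2) :
    ∑ ω : Fin n → Bool,
        weight p n ω * (if stabTime n ω = t then (1 : ℝ) else 0)
      = (p ^ (n + 1) - (1 - p) ^ (n + 1)) / (2 * p - 1)
            * (if t = 0 then (1 : ℝ) else 0)
        + ∑ r ∈ Finset.range (n - 1),
            (((1 - p) * p ^ (n - r) - p * (1 - p) ^ (n - r)) / (2 * p - 1)) *
              ∑ x : Fin r → Bool,
                weight p r x *
                  (if stabTime (r + 2) (special r x) = t then (1 : ℝ) else 0) := by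
  classical
  have h2p : (2 * p - 1 : ℝ) ≠ 0 := fun hc => hne (by linarith)
  -- the stable part
  have hstable :
      ∑ ω ∈ Finset.univ.filter (fun ω : Fin n → Bool => IsStable n ω),
          weight p n ω * (if stabTime n ω = t then (1 : ℝ) else 0)
        = (p ^ (n + 1) - (1 - p) ^ (n + 1)) / (2 * p - 1)
            * (if t = 0 then (1 : ℝ) else 0) := by
    have hb : ∑ a ∈ range (n + 1),
          (p ^ a * (1 - p) ^ (n - a)) * (if t = 0 then (1 : ℝ) else 0)
        = ∑ ω ∈ Finset.univ.filter (fun ω : Fin n → Bool => IsStable n ω),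
            weight p n ω * (if stabTime n ω = t then (1 : ℝ) else 0) := by
      refine Finset.sum_bij (fun a _ => emb n a 0 Fin.elim0) ?_ ?_ ?_ ?_
      · intro a ha
        simp only [Finset.mem_filter, Finset.mem_univ, true_and]
        exact isStable_ones (by have := mem_range.1 ha; omega) Fin.elim0
      · intro a ha a' ha' hEq
        exact ones_inj (by have := mem_range.1 ha; omega)
          (by have := mem_range.1 ha'; omega) hEq
      · intro ω hω
        obtain ⟨a, han, hdec⟩ := isStable_decomp ((Finset.mem_filter.1 hω).2)
        exact ⟨a, mem_range.2 han, hdec.symm⟩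
      · intro a ha
        have han : a ≤ n := by have := mem_range.1 ha; omega
        rw [weight_emb (show a + 0 ≤ n by omega) Fin.elim0 p, weight_nil,
          stabTime_of_isStable (isStable_ones han Fin.elim0)]
        by_cases ht : t = 0
        · subst ht; simp
        · rw [if_neg ht, if_neg (fun hc : (0 : ℕ) = t => ht hc.symm)]
          ring
    rw [← hb, ← Finset.sum_mul]
    congr 1
    have hg := geom_aux hne (n + 1)
    simpa using hg
  -- the unstable part
  have hunstable :
      ∑ ω ∈ Finset.univ.filter (fun ω : Fin n → Bool => ¬ IsStable n ω),
          weight p n ω * (if stabTime n ω = t then (1 : ℝ) else 0)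
        = ∑ r ∈ range (n - 1), ∑ a ∈ range (n - 1 - r), ∑ x : Fin r → Bool,
            ((p ^ a * ((1 - p) * weight p r x * p) * (1 - p) ^ (n - a - (r + 2)))
              * (if stabTime (r + 2) (special r x) = t then (1 : ℝ) else 0)) := by
    symm
    rw [Finset.sum_congr rfl (fun r (_ : r ∈ range (n - 1)) =>
      Finset.sum_sigma' (range (n - 1 - r)) (fun _ => (Finset.univ : Finset (Fin r → Bool)))
        (fun a x => (p ^ a * ((1 - p) * weight p r x * p) * (1 - p) ^ (n - a - (r + 2)))
          * (if stabTime (r + 2) (special r x) = t then (1 : ℝ) else 0)))]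
    rw [Finset.sum_sigma' (range (n - 1))]
    refine Finset.sum_bij
      (fun z _ => emb n z.2.1 (z.1 + 2) (special z.1 z.2.2)) ?_ ?_ ?_ ?_
    · intro z hz
      simp only [Finset.mem_sigma, Finset.mem_range] at hz
      simp only [Finset.mem_filter, Finset.mem_univ, true_and]
      rw [isStable_emb (by omega) (special z.1 z.2.2)]
      exact not_isStable_special z.1 z.2.2
    · intro z1 hz1 z2 hz2 hEq
      simp only [Finset.mem_sigma, Finset.mem_range] at hz1 hz2
      obtain ⟨r1, a1, x1⟩ := z1
      obtain ⟨r2, a2, x2⟩ := z2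
      obtain ⟨ha, hr, hx⟩ := emb_special_inj (by omega) (by omega) hEq
      subst hr
      subst ha
      dsimp only at hx ⊢
      rw [eq_of_heq hx]
    · intro ω hω
      obtain ⟨r, a, x, hr, ha, hdec⟩ := unstable_decomp ((Finset.mem_filter.1 hω).2)
      exact ⟨⟨r, a, x⟩, by simp [Finset.mem_sigma, hr, ha], hdec.symm⟩
    · intro z hz
      simp only [Finset.mem_sigma, Finset.mem_range] at hz
      rw [weight_emb (show z.2.1 + (z.1 + 2) ≤ n by omega) (special z.1 z.2.2) p,
        weight_special, stabTime_emb (show z.2.1 + (z.1 + 2) ≤ n by omega)]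
  rw [← Finset.sum_filter_add_sum_filter_not Finset.univ (fun ω : Fin n → Bool => IsStable n ω)
      (fun ω => weight p n ω * (if stabTime n ω = t then (1 : ℝ) else 0)),
    hstable, hunstable]
  congr 1
  refine Finset.sum_congr rfl fun r hr => ?_
  have hrn : r < n - 1 := mem_range.1 hr
  have hNr : n - r = (n - 1 - r) + 1 := by omega
  calc
    ∑ a ∈ range (n - 1 - r), ∑ x : Fin r → Bool,
        ((p ^ a * ((1 - p) * weight p r x * p) * (1 - p) ^ (n - a - (r + 2)))
          * (if stabTime (r + 2) (special r x) = t then (1 : ℝ) else 0))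
      = ∑ a ∈ range (n - 1 - r),
          (p ^ a * (1 - p) ^ ((n - 1 - r) - 1 - a)) *
            ((1 - p) * p * ∑ x : Fin r → Bool,
              weight p r x * (if stabTime (r + 2) (special r x) = t then (1 : ℝ) else 0)) := by
        refine Finset.sum_congr rfl fun a ha => ?_
        rw [Finset.mul_sum, Finset.mul_sum]
        refine Finset.sum_congr rfl fun x _ => ?_
        rw [show n - a - (r + 2) = (n - 1 - r) - 1 - a by have := mem_range.1 ha; omega]
        ring
    _ = (∑ a ∈ range (n - 1 - r), p ^ a * (1 - p) ^ ((n - 1 - r) - 1 - a)) *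
          ((1 - p) * p * ∑ x : Fin r → Bool,
            weight p r x * (if stabTime (r + 2) (special r x) = t then (1 : ℝ) else 0)) := by
        rw [← Finset.sum_mul]
    _ = ((p ^ (n - 1 - r) - (1 - p) ^ (n - 1 - r)) / (2 * p - 1)) *
          ((1 - p) * p * ∑ x : Fin r → Bool,
            weight p r x * (if stabTime (r + 2) (special r x) = t then (1 : ℝ) else 0)) := by
        rw [geom_aux hne]
    _ = (((1 - p) * p ^ (n - r) - p * (1 - p) ^ (n - r)) / (2 * p - 1)) *
          ∑ x : Fin r → Bool,
            weight p r x * (if stabTime (r + 2) (special r x) = t then (1 : ℝ) else 0) := by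
        rw [hNr, pow_succ, pow_succ]
        field_simp
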